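/- Let A be a finite linearly ordered alphabet and n ≥ 1. For each i with 0 ≤ i < n and each prefix s ∈ A^i, let P(·|s) be a probability mass function on A (nonnegative values summing to 1), and let F(a|s) = Σ_{b ≤ a} P(b|s) with F(a₀|s) = 0 for notation (a₀ below the smallest symbol). Define recursively x(λ) = 0, y(λ) = 1, and for a prefix s and symbol a: x(sa) = x(s) + y(s)·F(a⁻|s) and y(sa) = y(s)·P(a|s), where a⁻ is the predecessor of a (with F(a⁻|s) = 0 if a is the smallest symbol). Then for every c ∈ Aⁿ: (i) y(c) = Π_{i=0}^{n−1} P(c_{i+1}|c₁^i); (ii) x(c) = Σ_{c' ∈ Aⁿ, c' <_lex c} y(c'); and (iii) the intervals I(c) = [x(c), x(c) + y(c)) for c ∈ Aⁿ are pairwise disjoint and their union is [0, 1). -/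

import Mathlib

open Finset

private lemma cons_lt_cons_iff' {A : Type*} [LinearOrder A] {a b : A} {l m : List A} :
    a :: l < b :: m ↔ a < b ∨ (a = b ∧ l < m) := by
  constructor
  · intro h
    cases h with
    | cons h => exact Or.inr ⟨rfl, h⟩
    | rel h => exact Or.inl h
  · rintro (h | ⟨rfl, h⟩)
    · exact List.Lex.rel h
    · exact List.Lex.cons h

private lemma snoc_lt_snoc_iff {A : Type*} [LinearOrder A] :
    ∀ {u t : List A}, u.length = t.length → ∀ (b a : A),
      u ++ [b] < t ++ [a] ↔ u < t ∨ (u = t ∧ b < a) := by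
  intro u
  induction u with
  | nil =>
    intro t ht b a
    have : t = [] := by cases t <;> simp_all
    subst this
    have h0 : ¬ ([] < ([] : List A)) := lt_irrefl _
    simp [cons_lt_cons_iff', h0]
  | cons xhd xtl ih =>
    intro t ht b a
    cases t with
    | nil => simp at ht
    | cons yhd ytl =>
      simp only [List.cons_append, cons_lt_cons_iff', List.cons.injEq]
      rw [ih (by simpa using ht)]
      tauto

private lemma ofFn_snoc' {A : Type*} {k : ℕ} (u : Fin k → A) (b : A) :
    List.ofFn (Fin.snoc u b) = List.ofFn u ++ [b] := by
  rw [List.ofFn_succ']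
  simp [List.concat_eq_append]

private lemma ac_key {A : Type*} [Fintype A] [LinearOrder A]
    (n : ℕ) (P : List A → A → ℝ)
    (hP : ∀ s : List A, s.length < n → (∀ a, 0 ≤ P s a) ∧ ∑ a, P s a = 1)
    (x y : List A → ℝ) (hx0 : x [] = 0) (hy0 : y [] = 1)
    (hxstep : ∀ s : List A, s.length < n → ∀ a : A,
      x (s ++ [a]) = x s + y s * ∑ b ∈ Finset.univ.filter (fun b => b < a), P s b)
    (hystep : ∀ s : List A, s.length < n → ∀ a : A,
      y (s ++ [a]) = y s * P s a) :
    ∀ k, k ≤ n →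
      ((∀ c : Fin k → A, 0 ≤ y (List.ofFn c)) ∧
       (∑ c : Fin k → A, y (List.ofFn c)) = 1 ∧
       (∀ c : Fin k → A, y (List.ofFn c) = ∏ i : Fin k, P ((List.ofFn c).take i) (c i)) ∧
       (∀ c : Fin k → A, x (List.ofFn c) =
         ∑ c' ∈ Finset.univ.filter (fun c' : Fin k → A => List.ofFn c' < List.ofFn c),
           y (List.ofFn c'))) := by
  intro k
  induction k with
  | zero =>
    intro _
    have h0 : ¬ ([] < ([] : List A)) := lt_irrefl _
    refine ⟨?_, ?_, ?_, ?_⟩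
    · intro c; simp [List.ofFn_zero, hy0]
    · simp [List.ofFn_zero, hy0]
    · intro c; simp [List.ofFn_zero, hy0]
    · intro c
      rw [Finset.filter_false_of_mem, Finset.sum_empty]
      · simp [List.ofFn_zero, hx0]
      · intro c' _; simp [List.ofFn_zero, h0]
  | succ k ih =>
    intro hk
    have hkn : k < n := hk
    obtain ⟨ihnn, ihsum, ihprod, ihx⟩ := ih (le_of_lt hkn)
    have hlen : ∀ u : Fin k → A, (List.ofFn u).length < n := by
      intro u; simpa using hkn
    have hsum : ∀ f : (Fin (k + 1) → A) → ℝ,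
        ∑ c, f c = ∑ u : Fin k → A, ∑ b : A, f (Fin.snoc u b) := by
      intro f
      rw [← Equiv.sum_comp (Equiv.mk (fun p : (Fin k → A) × A => Fin.snoc p.1 p.2)
            (fun c => (Fin.init c, c (Fin.last k)))
            (fun p => by simp) (fun c => by simp)) f,
        Fintype.sum_prod_type]
      simp only [Equiv.coe_fn_mk]
    have hsnoc : ∀ c : Fin (k + 1) → A, ∃ (u : Fin k → A) (b : A), c = Fin.snoc u b :=
      fun c => ⟨Fin.init c, c (Fin.last k), (Fin.snoc_init_self c).symm⟩
    have hyy : ∀ (u : Fin k → A) (b : A),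
        y (List.ofFn (Fin.snoc u b)) = y (List.ofFn u) * P (List.ofFn u) b := by
      intro u b
      rw [ofFn_snoc']
      exact hystep _ (hlen u) b
    have hy1 : ∀ u : Fin k → A, ∑ b, y (List.ofFn u) * P (List.ofFn u) b = y (List.ofFn u) := by
      intro u
      rw [← Finset.mul_sum, (hP _ (hlen u)).2, mul_one]
    refine ⟨?_, ?_, ?_, ?_⟩
    · intro c
      obtain ⟨u, b, rfl⟩ := hsnoc c
      rw [hyy]
      exact mul_nonneg (ihnn u) ((hP _ (hlen u)).1 b)
    · rw [hsum]
      calc ∑ u : Fin k → A, ∑ b, y (List.ofFn (Fin.snoc u b))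
          = ∑ u : Fin k → A, y (List.ofFn u) := by
            refine Finset.sum_congr rfl fun u _ => ?_
            simp only [hyy]
            exact hy1 u
        _ = 1 := ihsum
    · intro c
      obtain ⟨u, b, rfl⟩ := hsnoc c
      rw [hyy, Fin.prod_univ_castSucc]
      have h1 : ∀ i : Fin k,
          P ((List.ofFn (Fin.snoc u b)).take ((i.castSucc : Fin (k+1)) : ℕ)) ((Fin.snoc u b : Fin (k+1) → A) i.castSucc)
            = P ((List.ofFn u).take i) (u i) := by
        intro i
        rw [ofFn_snoc', Fin.snoc_castSucc,
          List.take_append_of_le_length (by simp [Fin.is_le' ]), Fin.coe_castSucc]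
      have h2 : P ((List.ofFn (Fin.snoc u b)).take ((Fin.last k : Fin (k+1)) : ℕ)) ((Fin.snoc u b : Fin (k+1) → A) (Fin.last k))
          = P (List.ofFn u) b := by
        rw [ofFn_snoc', Fin.snoc_last]
        congr 1
        have : (Fin.last k).val = (List.ofFn u).length := by simp
        rw [this, List.take_left]
      rw [h2]
      rw [Finset.prod_congr rfl (fun i _ => h1 i), ← ihprod u]
    · intro c
      obtain ⟨u, a, rfl⟩ := hsnoc c
      have hlhs : x (List.ofFn (Fin.snoc u a)) =
          x (List.ofFn u) + y (List.ofFn u) *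
            ∑ b ∈ Finset.univ.filter (fun b => b < a), P (List.ofFn u) b := by
        rw [ofFn_snoc']
        exact hxstep _ (hlen u) a
      rw [hlhs]
      symm
      conv_lhs => rw [Finset.sum_filter]
      rw [hsum]
      have hcond : ∀ (u' : Fin k → A) (b : A),
          (List.ofFn (Fin.snoc u' b) < List.ofFn (Fin.snoc u a)) ↔
          (List.ofFn u' < List.ofFn u ∨ (u' = u ∧ b < a)) := by
        intro u' b
        rw [ofFn_snoc', ofFn_snoc', snoc_lt_snoc_iff (by simp), List.ofFn_inj]
      have hterm : ∀ (u' : Fin k → A) (b : A),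
          (if List.ofFn (Fin.snoc u' b) < List.ofFn (Fin.snoc u a)
            then y (List.ofFn (Fin.snoc u' b)) else 0) =
          (if List.ofFn u' < List.ofFn u then y (List.ofFn u') * P (List.ofFn u') b else 0) +
          (if u' = u ∧ b < a then y (List.ofFn u') * P (List.ofFn u') b else 0) := by
        intro u' b
        rw [hyy]
        by_cases h1 : List.ofFn u' < List.ofFn u
        · have h2 : ¬ (u' = u ∧ b < a) := by
            rintro ⟨rfl, -⟩; exact lt_irrefl _ h1
          rw [if_pos ((hcond u' b).mpr (Or.inl h1)), if_pos h1, if_neg h2, add_zero]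
        · by_cases h2 : u' = u ∧ b < a
          · rw [if_pos ((hcond u' b).mpr (Or.inr h2)), if_neg h1, if_pos h2, zero_add]
          · have hc : ¬ List.ofFn (Fin.snoc u' b) < List.ofFn (Fin.snoc u a) := by
              intro h
              rcases (hcond u' b).mp h with h | h
              exacts [h1 h, h2 h]
            rw [if_neg hc, if_neg h1, if_neg h2, add_zero]
      calc ∑ u' : Fin k → A, ∑ b : A,
            (if List.ofFn (Fin.snoc u' b) < List.ofFn (Fin.snoc u a)
              then y (List.ofFn (Fin.snoc u' b)) else 0)
          = (∑ u' : Fin k → A, ∑ b : A,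
              (if List.ofFn u' < List.ofFn u then y (List.ofFn u') * P (List.ofFn u') b else 0)) +
            (∑ u' : Fin k → A, ∑ b : A,
              (if u' = u ∧ b < a then y (List.ofFn u') * P (List.ofFn u') b else 0)) := by
            rw [← Finset.sum_add_distrib]
            refine Finset.sum_congr rfl fun u' _ => ?_
            rw [← Finset.sum_add_distrib]
            exact Finset.sum_congr rfl fun b _ => hterm u' b
        _ = x (List.ofFn u) + y (List.ofFn u) *
              ∑ b ∈ Finset.univ.filter (fun b => b < a), P (List.ofFn u) b := by
            congr 1
            · rw [ihx u, Finset.sum_filter]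
              refine Finset.sum_congr rfl fun u' _ => ?_
              by_cases h1 : List.ofFn u' < List.ofFn u
              · simp only [h1, if_true]
                exact hy1 u'
              · simp [h1]
            · have : ∀ u' : Fin k → A, (∑ b : A,
                  if u' = u ∧ b < a then y (List.ofFn u') * P (List.ofFn u') b else 0) =
                  if u' = u then ∑ b : A,
                    (if b < a then y (List.ofFn u) * P (List.ofFn u) b else 0) else 0 := by
                intro u'
                by_cases h : u' = u
                · subst h; simp
                · simp [h]
              rw [Finset.sum_congr rfl fun u' _ => this u', Finset.sum_ite_eq' Finset.univ u,
                if_pos (Finset.mem_univ u), Finset.mul_sum, Finset.sum_filter]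

/-- Infinite-precision interval computation of an arithmetic-coding based
    distribution matcher: the recursion `x(λ)=0`, `y(λ)=1`,
    `x(sa) = x(s) + y(s)·F(a⁻|s)`, `y(sa) = y(s)·P(a|s)` yields, for every
    codeword `c ∈ Aⁿ`: (i) `y(c) = Π P(c_{i+1}|c₁^i)`;
    (ii) `x(c) = Σ_{c' <_lex c} y(c')`; (iii) the intervals
    `[x(c), x(c)+y(c))` partition `[0,1)`. -/
theorem ac_intervals_partition {A : Type*} [Fintype A] [LinearOrder A]
    (n : ℕ) (hn : 1 ≤ n)
    (P : List A → A → ℝ)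
    (hP : ∀ s : List A, s.length < n → (∀ a, 0 ≤ P s a) ∧ ∑ a, P s a = 1)
    (x y : List A → ℝ) (hx0 : x [] = 0) (hy0 : y [] = 1)
    (hxstep : ∀ s : List A, s.length < n → ∀ a : A,
      x (s ++ [a]) = x s + y s * ∑ b ∈ Finset.univ.filter (fun b => b < a), P s b)
    (hystep : ∀ s : List A, s.length < n → ∀ a : A,
      y (s ++ [a]) = y s * P s a) :
    (∀ c : Fin n → A,
        y (List.ofFn c) = ∏ i : Fin n, P ((List.ofFn c).take i) (c i)) ∧
    (∀ c : Fin n → A,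
        x (List.ofFn c) =
          ∑ c' ∈ Finset.univ.filter
              (fun c' : Fin n → A => List.ofFn c' < List.ofFn c),
            y (List.ofFn c')) ∧
    (∀ c₁ c₂ : Fin n → A, c₁ ≠ c₂ →
        Disjoint
          (Set.Ico (x (List.ofFn c₁)) (x (List.ofFn c₁) + y (List.ofFn c₁)))
          (Set.Ico (x (List.ofFn c₂)) (x (List.ofFn c₂) + y (List.ofFn c₂)))) ∧
    (⋃ c : Fin n → A,
        Set.Ico (x (List.ofFn c)) (x (List.ofFn c) + y (List.ofFn c))) =
      Set.Ico (0 : ℝ) 1 := by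
  obtain ⟨hynn, hsum1, hprod, hxval⟩ :=
    ac_key n P hP x y hx0 hy0 hxstep hystep n le_rfl
  -- A is nonempty
  have hA : Nonempty A := by
    by_contra h
    rw [not_nonempty_iff] at h
    have := (hP [] (Nat.lt_of_lt_of_le Nat.zero_lt_one hn)).2
    rw [Finset.univ_eq_empty, Finset.sum_empty] at this
    norm_num at this
  -- x c + y c as a sum over an `insert`
  have hnotmem : ∀ c : Fin n → A,
      c ∉ Finset.univ.filter (fun c' : Fin n → A => List.ofFn c' < List.ofFn c) := by
    intro c hc
    rw [Finset.mem_filter] at hc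
    exact lt_irrefl _ hc.2
  have hxy : ∀ c : Fin n → A, x (List.ofFn c) + y (List.ofFn c) =
      ∑ c' ∈ insert c (Finset.univ.filter
        (fun c' : Fin n → A => List.ofFn c' < List.ofFn c)), y (List.ofFn c') := by
    intro c
    rw [Finset.sum_insert (hnotmem c), hxval c, add_comm]
  -- monotonicity across the lex order
  have hle : ∀ c₁ c₂ : Fin n → A, List.ofFn c₁ < List.ofFn c₂ →
      x (List.ofFn c₁) + y (List.ofFn c₁) ≤ x (List.ofFn c₂) := by
    intro c₁ c₂ h
    rw [hxy c₁, hxval c₂]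
    apply Finset.sum_le_sum_of_subset_of_nonneg
    · intro c' hc'
      simp only [Finset.mem_insert, Finset.mem_filter, Finset.mem_univ, true_and] at hc' ⊢
      rcases hc' with rfl | hlt
      · exact h
      · exact lt_trans hlt h
    · intro c' _ _; exact hynn c'
  have hxnn : ∀ c : Fin n → A, 0 ≤ x (List.ofFn c) := by
    intro c
    rw [hxval c]
    exact Finset.sum_nonneg fun c' _ => hynn c'
  have hxy1 : ∀ c : Fin n → A, x (List.ofFn c) + y (List.ofFn c) ≤ 1 := by
    intro c
    rw [hxy c, ← hsum1]
    exact Finset.sum_le_sum_of_subset_of_nonneg (Finset.subset_univ _)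
      (fun c' _ _ => hynn c')
  refine ⟨hprod, hxval, ?_, ?_⟩
  · -- disjointness
    intro c₁ c₂ hne
    have hne' : List.ofFn c₁ ≠ List.ofFn c₂ := fun h => hne (List.ofFn_inj.mp h)
    rcases lt_or_gt_of_ne hne' with h | h
    · exact Set.Ico_disjoint_Ico.mpr
        (le_trans (min_le_left _ _) (le_trans (hle c₁ c₂ h) (le_max_right _ _)))
    · exact Set.Ico_disjoint_Ico.mpr
        (le_trans (min_le_right _ _) (le_trans (hle c₂ c₁ h) (le_max_left _ _)))
  · -- union
    apply Set.Subset.antisymm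
    · apply Set.iUnion_subset
      intro c
      exact Set.Ico_subset_Ico (hxnn c) (hxy1 c)
    · intro t ht
      obtain ⟨ht0, ht1⟩ := ht
      -- the minimal codeword has x = 0
      obtain ⟨c₀, -, hc₀min⟩ :=
        Finset.exists_min_image (Finset.univ : Finset (Fin n → A)) List.ofFn
          Finset.univ_nonempty
      have hxc₀ : x (List.ofFn c₀) = 0 := by
        rw [hxval c₀, Finset.filter_false_of_mem, Finset.sum_empty]
        intro c' _
        exact not_lt.mpr (hc₀min c' (Finset.mem_univ c'))
      set S := Finset.univ.filter (fun c : Fin n → A => x (List.ofFn c) ≤ t) with hS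
      have hSne : S.Nonempty := ⟨c₀, by
        rw [hS, Finset.mem_filter]
        exact ⟨Finset.mem_univ _, by rw [hxc₀]; exact ht0⟩⟩
      obtain ⟨c, hcS, hcmax⟩ := Finset.exists_max_image S List.ofFn hSne
      have hcx : x (List.ofFn c) ≤ t := (Finset.mem_filter.mp hcS).2
      rw [Set.mem_iUnion]
      refine ⟨c, hcx, ?_⟩
      by_contra hge
      push_neg at hge
      set T := Finset.univ.filter (fun c' : Fin n → A => List.ofFn c < List.ofFn c') with hT
      by_cases hTne : T.Nonempty
      · obtain ⟨cp, hcpT, hcpmin⟩ := Finset.exists_min_image T List.ofFn hTne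
        have hccp : List.ofFn c < List.ofFn cp := (Finset.mem_filter.mp hcpT).2
        have hstep : x (List.ofFn cp) ≤ x (List.ofFn c) + y (List.ofFn c) := by
          rw [hxval cp, hxy c]
          apply Finset.sum_le_sum_of_subset_of_nonneg
          · intro c' hc'
            simp only [Finset.mem_filter, Finset.mem_univ, true_and] at hc'
            have hnc : ¬ List.ofFn c < List.ofFn c' := by
              intro h
              have : c' ∈ T := Finset.mem_filter.mpr ⟨Finset.mem_univ _, h⟩
              exact absurd hc' (not_lt.mpr (hcpmin c' this))
            rcases lt_or_eq_of_le (le_of_not_gt hnc) with h | h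
            · exact Finset.mem_insert.mpr (Or.inr
                (Finset.mem_filter.mpr ⟨Finset.mem_univ _, h⟩))
            · exact Finset.mem_insert.mpr (Or.inl (List.ofFn_inj.mp h))
          · intro c' _ _; exact hynn c'
        have hcpS : cp ∈ S := Finset.mem_filter.mpr
          ⟨Finset.mem_univ _, le_trans hstep hge⟩
        exact absurd hccp (not_lt.mpr (hcmax cp hcpS))
      · -- c is the lex-largest codeword
        rw [Finset.not_nonempty_iff_eq_empty, hT, Finset.filter_eq_empty_iff] at hTne
        have huniv : (Finset.univ : Finset (Fin n → A)) =
            insert c (Finset.univ.filter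
              (fun c' : Fin n → A => List.ofFn c' < List.ofFn c)) := by
          ext c'
          simp only [Finset.mem_univ, Finset.mem_insert, Finset.mem_filter, true_and,
            true_iff]
          rcases lt_or_eq_of_le (le_of_not_gt (hTne (Finset.mem_univ c'))) with h | h
          · exact Or.inr h
          · exact Or.inl (List.ofFn_inj.mp h)
        have : (1 : ℝ) ≤ t := by
          rw [← hsum1, huniv, ← hxy c]
          exact hge
        linarith
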